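/- arXiv:1206.2512 — 2 statements merged into one kernel-verified Lean document; each statement's English description precedes it below -/
import Mathlib

section
/- Let H be a k-uniform k-partite hypergraph with vertex partition V_1, …, V_k, and suppose there exists an index i such that every vertex of V_i lies in exactly two edges of H. Then the Graver basis of I_H generates the ideal I_H, and every element of the Graver basis is an indispensable binomial of I_H; consequently the Graver basis is the unique minimal binomial generating set of I_H. -/
open MvPolynomial

namespace ToricHG

variable (K : Type) [Field K] (V : Type) [Fintype V] [DecidableEq V]

/-- The edges of a hypergraph with edge set `E`, as a type. -/
abbrev Edge (E : Finset (Finset V)) : Type := {e : Finset V // e ∈ E}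

/-- The monomial map `t_e ↦ ∏_{v ∈ e} x_v`. -/
noncomputable def phiH (E : Finset (Finset V)) :
    MvPolynomial (Edge V E) K →ₐ[K] MvPolynomial V K :=
  aeval (fun e : Edge V E => ∏ v ∈ e.1, (X v : MvPolynomial V K))

/-- The toric ideal of a hypergraph. -/
noncomputable def toricIdeal (E : Finset (Finset V)) :
    Ideal (MvPolynomial (Edge V E) K) :=
  RingHom.ker (phiH K V E).toRingHom

/-- The number of edges of the multiset `M` containing `v`, counted with multiplicity. -/
def degIn (E : Finset (Finset V)) (v : V) (M : Multiset (Edge V E)) : ℕ :=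
  Multiset.card (M.filter (fun e => v ∈ e.1))

/-- The bicolored edge multiset `(B, R)` is balanced. -/
def Balanced (E : Finset (Finset V)) (B R : Multiset (Edge V E)) : Prop :=
  ∀ v : V, degIn V E v B = degIn V E v R

/-- The binomial arising from the bicolored edge multiset `(B, R)`. -/
noncomputable def binom (E : Finset (Finset V)) (B R : Multiset (Edge V E)) :
    MvPolynomial (Edge V E) K :=
  (B.map fun e => (X e : MvPolynomial (Edge V E) K)).prod -
    (R.map fun e => (X e : MvPolynomial (Edge V E) K)).prod

/-- The balanced edge set `(B, R)` is primitive. -/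
def Primitive (E : Finset (Finset V)) (B R : Multiset (Edge V E)) : Prop :=
  Balanced V E B R ∧
    ¬ ∃ B' R' : Multiset (Edge V E),
        ¬(B' = 0 ∧ R' = 0) ∧ Balanced V E B' R' ∧ B' < B ∧ R' < R

/-- The balanced edge set `(Fb, Fr)` is reducible with separator `S` and
decomposition `((G1b, G1r), S, (G2b, G2r))`. -/
def ReducibleWith (E : Finset (Finset V))
    (Fb Fr S G1b G1r G2b G2r : Multiset (Edge V E)) : Prop :=
  Balanced V E Fb Fr ∧ S ≠ 0 ∧ S.toFinset ⊆ (Fb + Fr).toFinset ∧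
    Balanced V E G1b G1r ∧ Balanced V E G2b G2r ∧
    ¬(G1b = Fb ∧ G1r = Fr) ∧ ¬(G2b = Fb ∧ G2r = Fr) ∧
    S = G1r ∩ G2b ∧ Fb = G1b + G2b ∧ Fr = G1r + G2r

/-- `S` is a splitting set of the balanced edge set `(Eb, Er)` with
decomposition `((G1b, G1r), S, (G2b, G2r))`, i.e. `(Eb, Er) + S` is reducible with
separator `S` and this decomposition. -/
def SplittingSetWith (E : Finset (Finset V))
    (Eb Er S G1b G1r G2b G2r : Multiset (Edge V E)) : Prop :=
  ReducibleWith V E (Eb + S) (Er + S) S G1b G1r G2b G2r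

/-- `S` is a proper splitting set of the balanced edge set `(Eb, Er)`. -/
def ProperSplittingSet (E : Finset (Finset V))
    (Eb Er S : Multiset (Edge V E)) : Prop :=
  ∃ G1b G1r G2b G2r : Multiset (Edge V E),
    SplittingSetWith V E Eb Er S G1b G1r G2b G2r ∧ S < G1r ∧ S < G2b

/-- A binomial: the difference of two distinct monic monomials. -/
def IsBinomial (E : Finset (Finset V)) (f : MvPolynomial (Edge V E) K) : Prop :=
  ∃ a b : (Edge V E) →₀ ℕ, a ≠ b ∧ f = monomial a 1 - monomial b 1

/-- `f` is an indispensable binomial of the toric ideal of the hypergraph. -/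
def Indispensable (E : Finset (Finset V)) (f : MvPolynomial (Edge V E) K) : Prop :=
  ∀ G : Set (MvPolynomial (Edge V E) K),
    (∀ g ∈ G, IsBinomial K V E g) → Ideal.span G = toricIdeal K V E →
      f ∈ G ∨ -f ∈ G

/-- The Graver basis of the toric ideal of the hypergraph: the binomials arising from
primitive balanced edge sets `(B, R)` with `B ≠ R`. -/
def GraverSet (E : Finset (Finset V)) : Set (MvPolynomial (Edge V E) K) :=
  {f | ∃ B R : Multiset (Edge V E), Primitive V E B R ∧ B ≠ R ∧ f = binom K V E B R}

/-- The ideal `I` is generated in degree at most `d`. -/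
def GenInDegLE {σ : Type} (I : Ideal (MvPolynomial σ K)) (d : ℕ) : Prop :=
  I = Ideal.span {f | f ∈ I ∧ f.totalDegree ≤ d}

end ToricHG
namespace ToricHG

section Aux
set_option linter.unusedSectionVars false

variable {K : Type} [Field K] {V : Type} [Fintype V] [DecidableEq V] {E : Finset (Finset V)}

/-! ### Basic facts about `degIn` and `Balanced` -/

lemma degIn_zero (v : V) : degIn V E v 0 = 0 := rfl

lemma degIn_cons (v : V) (e : Edge V E) (M : Multiset (Edge V E)) :
    degIn V E v (e ::ₘ M) = (if v ∈ e.1 then 1 else 0) + degIn V E v M := by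
  unfold degIn
  rw [Multiset.filter_cons, Multiset.card_add]
  split <;> simp

lemma degIn_add (v : V) (M N : Multiset (Edge V E)) :
    degIn V E v (M + N) = degIn V E v M + degIn V E v N := by
  unfold degIn
  rw [Multiset.filter_add, Multiset.card_add]

lemma degIn_le (v : V) {M N : Multiset (Edge V E)} (h : M ≤ N) :
    degIn V E v M ≤ degIn V E v N := by
  obtain ⟨D, rfl⟩ := Multiset.le_iff_exists_add.mp h
  rw [degIn_add]; omega

lemma degIn_sub (v : V) {M N : Multiset (Edge V E)} (h : N ≤ M) :
    degIn V E v (M - N) = degIn V E v M - degIn V E v N := by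
  have h2 : (M - N) + N = M := tsub_add_cancel_of_le h
  have h3 := degIn_add v (M - N) N
  rw [h2] at h3
  omega

lemma balanced_symm {M N : Multiset (Edge V E)} (h : Balanced V E M N) :
    Balanced V E N M := fun v => (h v).symm

lemma eq_zero_of_degIn_zero (hE : ∀ e ∈ E, e.Nonempty) {M : Multiset (Edge V E)}
    (h : ∀ v, degIn V E v M = 0) : M = 0 := by
  by_contra hM
  obtain ⟨e, he⟩ := Multiset.exists_mem_of_ne_zero hM
  obtain ⟨v, hv⟩ := hE e.1 e.2
  have hmem : e ∈ M.filter (fun e => v ∈ e.1) := Multiset.mem_filter.mpr ⟨he, hv⟩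
  have hpos : 0 < degIn V E v M := Multiset.card_pos_iff_exists_mem.mpr ⟨e, hmem⟩
  have := h v
  omega

lemma balanced_zero (hE : ∀ e ∈ E, e.Nonempty) {M : Multiset (Edge V E)}
    (h : Balanced V E M 0) : M = 0 :=
  eq_zero_of_degIn_zero hE (fun v => h v)

lemma balanced_sub {B R B' R' : Multiset (Edge V E)} (h : Balanced V E B R)
    (h' : Balanced V E B' R') (hB : B' ≤ B) (hR : R' ≤ R) :
    Balanced V E (B - B') (R - R') := by
  intro v
  rw [degIn_sub v hB, degIn_sub v hR, h v, h' v]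

/-! ### The degree finsupp -/

/-- The vertex-degree vector of a multiset of edges, as a finsupp. -/
noncomputable def degF (M : Multiset (Edge V E)) : V →₀ ℕ :=
  (M.map fun e => ∑ v ∈ e.1, Finsupp.single v 1).sum

lemma degF_zero : degF (0 : Multiset (Edge V E)) = 0 := rfl

lemma degF_cons (e : Edge V E) (M : Multiset (Edge V E)) :
    degF (e ::ₘ M) = (∑ v ∈ e.1, Finsupp.single v 1) + degF M := by
  unfold degF
  rw [Multiset.map_cons, Multiset.sum_cons]

lemma degF_apply (M : Multiset (Edge V E)) (v : V) : degF M v = degIn V E v M := by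
  refine Multiset.induction_on M ?_ (fun e M ih => ?_)
  · rfl
  · have hsum : (∑ w ∈ e.1, Finsupp.single w (1 : ℕ)) v = if v ∈ e.1 then 1 else 0 := by
      rw [Finsupp.finset_sum_apply]
      simp [Finsupp.single_apply]
    rw [degF_cons, Finsupp.add_apply, ih, degIn_cons, hsum]

lemma balanced_iff_degF {B R : Multiset (Edge V E)} :
    Balanced V E B R ↔ degF B = degF R := by
  constructor
  · intro h
    ext v
    rw [degF_apply, degF_apply]
    exact h v
  · intro h v
    rw [← degF_apply, ← degF_apply, h]

/-! ### Monomials from multisets of edges -/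

/-- The monomial `∏_{e ∈ M} t_e`. -/
noncomputable def xp (M : Multiset (Edge V E)) : MvPolynomial (Edge V E) K :=
  (M.map fun e => (X e : MvPolynomial (Edge V E) K)).prod

lemma binom_def (B R : Multiset (Edge V E)) :
    binom K V E B R = xp (K := K) B - xp (K := K) R := rfl

lemma xp_zero : xp (K := K) (0 : Multiset (Edge V E)) = 1 := rfl

lemma xp_cons (e : Edge V E) (M : Multiset (Edge V E)) :
    xp (K := K) (e ::ₘ M) = X e * xp (K := K) M := by
  unfold xp
  rw [Multiset.map_cons, Multiset.prod_cons]

lemma xp_add (M N : Multiset (Edge V E)) :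
    xp (K := K) (M + N) = xp (K := K) M * xp (K := K) N := by
  unfold xp
  rw [Multiset.map_add, Multiset.prod_add]

lemma xp_eq_monomial (M : Multiset (Edge V E)) :
    xp (K := K) M = monomial (Multiset.toFinsupp M) (1 : K) := by
  refine Multiset.induction_on M ?_ (fun e M ih => ?_)
  · simp [xp_zero]
  · rw [xp_cons, ih, show (X e : MvPolynomial (Edge V E) K) = monomial (Finsupp.single e 1) 1 from rfl,
      monomial_mul, one_mul]
    congr 1
    rw [← Multiset.singleton_add, map_add, Multiset.toFinsupp_singleton]

lemma binom_eq (B R : Multiset (Edge V E)) :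
    binom K V E B R
      = monomial (Multiset.toFinsupp B) (1 : K) - monomial (Multiset.toFinsupp R) 1 := by
  rw [binom_def, xp_eq_monomial, xp_eq_monomial]

lemma prod_X_eq (s : Finset V) :
    (∏ v ∈ s, (X v : MvPolynomial V K))
      = monomial (∑ v ∈ s, Finsupp.single v 1) (1 : K) := by
  classical
  induction s using Finset.induction_on with
  | empty => simp
  | insert _ _ h ih =>
      rw [Finset.prod_insert h, Finset.sum_insert h, ih,
        show (X _ : MvPolynomial V K) = monomial (Finsupp.single _ 1) 1 from rfl,
        monomial_mul, one_mul]

lemma phi_xp (M : Multiset (Edge V E)) :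
    phiH K V E (xp (K := K) M) = monomial (degF M) (1 : K) := by
  refine Multiset.induction_on M ?_ (fun e M ih => ?_)
  · simp [xp_zero, degF_zero]
  · rw [xp_cons, map_mul, ih]
    have hX : phiH K V E (X e) = ∏ v ∈ e.1, (X v : MvPolynomial V K) := by
      simp [phiH]
    rw [hX, prod_X_eq, monomial_mul, one_mul, degF_cons]

lemma phi_monomial (a : Edge V E →₀ ℕ) (c : K) :
    phiH K V E (monomial a c) = monomial (degF (Finsupp.toMultiset a)) c := by
  have h1 : (monomial a c : MvPolynomial (Edge V E) K) = C c * monomial a 1 := by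
    rw [C_mul_monomial, mul_one]
  have h2 : (monomial a (1 : K) : MvPolynomial (Edge V E) K)
      = xp (K := K) (Finsupp.toMultiset a) := by
    rw [xp_eq_monomial, Finsupp.toMultiset_toFinsupp]
  have hC : phiH K V E (C c) = C c := by
    simp [phiH, aeval_C, algebraMap_eq]
  rw [h1, map_mul, h2, phi_xp, hC, C_mul_monomial, mul_one]

lemma monomial_one_inj {σ : Type} {s t : σ →₀ ℕ}
    (h : (monomial s (1 : K) : MvPolynomial σ K) = monomial t 1) : s = t := by
  classical
  by_contra hne
  have h2 := congrArg (coeff s) h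
  rw [coeff_monomial, coeff_monomial, if_pos rfl, if_neg (fun hh => hne hh.symm)] at h2
  exact one_ne_zero h2

lemma mem_toricIdeal_iff (B R : Multiset (Edge V E)) :
    binom K V E B R ∈ toricIdeal K V E ↔ Balanced V E B R := by
  rw [toricIdeal, RingHom.mem_ker]
  have hphi : (phiH K V E).toRingHom (binom K V E B R)
      = monomial (degF B) (1 : K) - monomial (degF R) 1 := by
    show phiH K V E (binom K V E B R) = _
    rw [binom_def, map_sub, phi_xp, phi_xp]
  rw [hphi, sub_eq_zero]
  constructor
  · intro h
    exact balanced_iff_degF.mpr (monomial_one_inj h)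
  · intro h
    rw [balanced_iff_degF.mp h]

lemma balanced_of_binomial_mem {a b : Edge V E →₀ ℕ}
    (h : (monomial a (1 : K) - monomial b 1 : MvPolynomial (Edge V E) K) ∈ toricIdeal K V E) :
    Balanced V E (Finsupp.toMultiset a) (Finsupp.toMultiset b) := by
  have h2 : binom K V E (Finsupp.toMultiset a) (Finsupp.toMultiset b) ∈ toricIdeal K V E := by
    rw [binom_eq, Finsupp.toMultiset_toFinsupp, Finsupp.toMultiset_toFinsupp]
    exact h
  exact (mem_toricIdeal_iff _ _).mp h2

end Aux

end ToricHG
namespace ToricHG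

section Span
set_option linter.unusedSectionVars false
variable {K : Type} [Field K] {V : Type} [Fintype V] [DecidableEq V] {E : Finset (Finset V)}

/-- The set of all balanced binomials. -/
def SBal (K : Type) [Field K] (V : Type) [Fintype V] [DecidableEq V]
    (E : Finset (Finset V)) : Set (MvPolynomial (Edge V E) K) :=
  {f | ∃ B R : Multiset (Edge V E), Balanced V E B R ∧ B ≠ R ∧ f = binom K V E B R}

lemma ker_le_span_sbal (n : ℕ) :
    ∀ f : MvPolynomial (Edge V E) K, f.support.card ≤ n → f ∈ toricIdeal K V E →
      f ∈ Ideal.span (SBal K V E) := by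
  induction n with
  | zero =>
      intro f hcard _
      have : f.support = ∅ := Finset.card_eq_zero.mp (Nat.le_zero.mp hcard)
      have hf0 : f = 0 := by
        by_contra h
        exact (MvPolynomial.support_nonempty.mpr h).ne_empty this
      rw [hf0]; exact zero_mem _
  | succ n ih =>
      intro f hcard hf
      by_cases h0 : f = 0
      · rw [h0]; exact zero_mem _
      obtain ⟨a, ha⟩ := MvPolynomial.support_nonempty.mpr h0
      classical
      set d := degF (Finsupp.toMultiset a) with hd
      have hker : phiH K V E f = 0 := hf
      have e1 : phiH K V E f
          = ∑ m ∈ f.support, monomial (degF (Finsupp.toMultiset m)) (coeff m f) := by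
        conv_lhs => rw [MvPolynomial.as_sum f]
        rw [map_sum]
        exact Finset.sum_congr rfl (fun m _ => phi_monomial m (coeff m f))
      have hsum : ∑ m ∈ f.support,
          (if degF (Finsupp.toMultiset m) = d then coeff m f else 0) = 0 := by
        have e2 := congrArg (MvPolynomial.coeff d) (e1.symm.trans hker)
        rw [MvPolynomial.coeff_sum] at e2
        simpa [MvPolynomial.coeff_monomial] using e2
      have hca : coeff a f ≠ 0 := MvPolynomial.mem_support_iff.mp ha
      have hrest : ∑ m ∈ f.support.erase a,
          (if degF (Finsupp.toMultiset m) = d then coeff m f else 0) = - coeff a f := by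
        have := Finset.add_sum_erase f.support
          (fun m => if degF (Finsupp.toMultiset m) = d then coeff m f else 0) ha
        rw [hsum] at this
        have this' : (if degF (Finsupp.toMultiset a) = d then coeff a f else 0)
            + ∑ x ∈ f.support.erase a,
                (if degF (Finsupp.toMultiset x) = d then coeff x f else 0) = 0 := this
        have h3 : (if degF (Finsupp.toMultiset a) = d then coeff a f else 0) = coeff a f := by
          rw [if_pos hd.symm]
        linear_combination this' - h3
      have hex : ∃ b ∈ f.support.erase a,
          (if degF (Finsupp.toMultiset b) = d then coeff b f else 0) ≠ 0 := by
        apply Finset.exists_ne_zero_of_sum_ne_zero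
        rw [hrest]
        exact neg_ne_zero.mpr hca
      obtain ⟨b, hb, hbne⟩ := hex
      have hba : b ≠ a := (Finset.mem_erase.mp hb).1
      have hbsupp : b ∈ f.support := (Finset.mem_erase.mp hb).2
      have hbd : degF (Finsupp.toMultiset b) = d := by
        by_contra h
        rw [if_neg h] at hbne
        exact hbne rfl
      set c := coeff a f with hc
      set g : MvPolynomial (Edge V E) K := monomial a 1 - monomial b 1 with hg
      have habm : Finsupp.toMultiset a ≠ Finsupp.toMultiset b := by
        intro h
        apply hba
        rw [← Finsupp.toMultiset_toFinsupp b, ← h, Finsupp.toMultiset_toFinsupp]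
      have hgbal : Balanced V E (Finsupp.toMultiset a) (Finsupp.toMultiset b) :=
        balanced_iff_degF.mpr (hd.symm.trans hbd.symm)
      have hgSB : g ∈ SBal K V E := by
        refine ⟨Finsupp.toMultiset a, Finsupp.toMultiset b, hgbal, habm, ?_⟩
        rw [binom_eq, Finsupp.toMultiset_toFinsupp, Finsupp.toMultiset_toFinsupp]
      have hg_ker : g ∈ toricIdeal K V E := by
        show phiH K V E g = 0
        rw [hg, map_sub, phi_monomial, phi_monomial, hbd, ← hd, sub_self]
      set f' := f - C c * g with hf'
      have hf'ker : f' ∈ toricIdeal K V E :=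
        sub_mem hf (Ideal.mul_mem_left _ _ hg_ker)
      have hsupp : f'.support ⊆ f.support.erase a := by
        intro m hm
        rw [Finset.mem_erase]
        have hcm : coeff m f' ≠ 0 := MvPolynomial.mem_support_iff.mp hm
        have hexp : coeff m f'
            = coeff m f - c * ((if a = m then 1 else 0) - (if b = m then 1 else 0)) := by
          rw [hf', hg, MvPolynomial.coeff_sub, MvPolynomial.coeff_C_mul,
            MvPolynomial.coeff_sub, MvPolynomial.coeff_monomial, MvPolynomial.coeff_monomial]
        constructor
        · rintro rfl
          apply hcm
          rw [hexp, if_pos rfl, if_neg hba]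
          simp [hc]
        · by_contra hmf
          apply hcm
          have hmf' : coeff m f = 0 := MvPolynomial.notMem_support_iff.mp hmf
          have hma : a ≠ m := by
            rintro rfl; exact hca hmf'
          have hmb : b ≠ m := by
            rintro rfl; exact (MvPolynomial.mem_support_iff.mp hbsupp) hmf'
          rw [hexp, if_neg hma, if_neg hmb, hmf']
          ring
      have hcard' : f'.support.card ≤ n := by
        have h1 : f.support.card ≤ n + 1 := hcard
        have h2 := Finset.card_le_card hsupp
        have h3 : (f.support.erase a).card = f.support.card - 1 :=
          Finset.card_erase_of_mem ha
        have h4 : 0 < f.support.card := Finset.card_pos.mpr ⟨a, ha⟩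
        omega
      have hf'span := ih f' hcard' hf'ker
      have : f = f' + C c * g := by rw [hf']; ring
      rw [this]
      exact add_mem hf'span (Ideal.mul_mem_left _ _ (Ideal.subset_span hgSB))

lemma binom_mem_span_graver (hE : ∀ e ∈ E, e.Nonempty) (n : ℕ) :
    ∀ B R : Multiset (Edge V E), Multiset.card B + Multiset.card R ≤ n →
      Balanced V E B R → binom K V E B R ∈ Ideal.span (GraverSet K V E) := by
  induction n with
  | zero =>
      intro B R hc _
      have hB : B = 0 := Multiset.card_eq_zero.mp (by omega)
      have hR : R = 0 := Multiset.card_eq_zero.mp (by omega)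
      rw [hB, hR, binom_def, sub_self]
      exact zero_mem _
  | succ n ih =>
      intro B R hc hbal
      by_cases hBR : B = R
      · rw [hBR, binom_def, sub_self]; exact zero_mem _
      by_cases hprim : Primitive V E B R
      · exact Ideal.subset_span ⟨B, R, hprim, hBR, rfl⟩
      · have hex : ∃ B' R' : Multiset (Edge V E),
            ¬(B' = 0 ∧ R' = 0) ∧ Balanced V E B' R' ∧ B' < B ∧ R' < R := by
          by_contra h
          exact hprim ⟨hbal, h⟩
        obtain ⟨B', R', hnz, hbal', hBlt, hRlt⟩ := hex
        have hB'B : B' ≤ B := le_of_lt hBlt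
        have hR'R : R' ≤ R := le_of_lt hRlt
        have hB'0 : B' ≠ 0 := by
          rintro rfl
          exact hnz ⟨rfl, balanced_zero hE (balanced_symm hbal')⟩
        have hR'0 : R' ≠ 0 := by
          rintro rfl
          exact hnz ⟨balanced_zero hE hbal', rfl⟩
        have key : binom K V E B R
            = xp (K := K) B' * binom K V E (B - B') (R - R')
              + xp (K := K) (R - R') * binom K V E B' R' := by
          have e1 : xp (K := K) B = xp (K := K) B' * xp (K := K) (B - B') := by
            rw [← xp_add, add_tsub_cancel_of_le hB'B]
          have e2 : xp (K := K) R = xp (K := K) R' * xp (K := K) (R - R') := by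
            rw [← xp_add, add_tsub_cancel_of_le hR'R]
          rw [binom_def, binom_def, binom_def, e1, e2]
          ring
        rw [key]
        have c1 : Multiset.card B' < Multiset.card B := Multiset.card_lt_card hBlt
        have c2 : Multiset.card R' < Multiset.card R := Multiset.card_lt_card hRlt
        have c3 : Multiset.card (B - B') = Multiset.card B - Multiset.card B' :=
          Multiset.card_sub hB'B
        have c4 : Multiset.card (R - R') = Multiset.card R - Multiset.card R' :=
          Multiset.card_sub hR'R
        have c5 : 0 < Multiset.card B' := Multiset.card_pos.mpr hB'0
        have c6 : 0 < Multiset.card R' := Multiset.card_pos.mpr hR'0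
        refine add_mem (Ideal.mul_mem_left _ _ ?_) (Ideal.mul_mem_left _ _ ?_)
        · exact ih (B - B') (R - R') (by omega) (balanced_sub hbal hbal' hB'B hR'R)
        · exact ih B' R' (by omega) hbal'

lemma span_graver_eq (hE : ∀ e ∈ E, e.Nonempty) :
    Ideal.span (GraverSet K V E) = toricIdeal K V E := by
  apply le_antisymm
  · rw [Ideal.span_le]
    rintro f ⟨B, R, hprim, hBR, rfl⟩
    exact (mem_toricIdeal_iff B R).mpr hprim.1
  · intro f hf
    have h1 : f ∈ Ideal.span (SBal K V E) := ker_le_span_sbal f.support.card f le_rfl hf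
    have h2 : Ideal.span (SBal K V E) ≤ Ideal.span (GraverSet K V E) := by
      rw [Ideal.span_le]
      rintro g ⟨B, R, hbal, hBR, rfl⟩
      exact binom_mem_span_graver hE _ B R le_rfl hbal
    exact h2 h1

end Span

end ToricHG
namespace ToricHG

section Conn
set_option linter.unusedSectionVars false
variable {K : Type} [Field K] {V : Type} [Fintype V] [DecidableEq V] {E : Finset (Finset V)}

/-- One binomial move: replace the part `a` of `p = m + a` by `b`, where
`t^a - t^b` belongs to `G`. -/
def MoveRel (G : Set (MvPolynomial (Edge V E) K)) (p q : Edge V E →₀ ℕ) : Prop :=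
  ∃ a b m : Edge V E →₀ ℕ,
    (monomial a (1 : K) - monomial b 1 : MvPolynomial (Edge V E) K) ∈ G ∧ p = m + a ∧ q = m + b

/-- The linear projection of the polynomial ring onto the free module on
move-equivalence classes of exponents. -/
noncomputable def psiQ (G : Set (MvPolynomial (Edge V E) K)) :
    MvPolynomial (Edge V E) K →+
      (Quotient (Relation.EqvGen.setoid (MoveRel (K := K) (E := E) G)) →₀ K) :=
  (Finsupp.mapDomain.addMonoidHom (Quotient.mk _)).comp
    AddMonoidAlgebra.coeffAddEquiv.toAddMonoidHom

lemma psiQ_monomial (G : Set (MvPolynomial (Edge V E) K)) (m : Edge V E →₀ ℕ) (c : K) :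
    psiQ G (monomial m c)
      = Finsupp.single (Quotient.mk (Relation.EqvGen.setoid (MoveRel (K := K) (E := E) G)) m) c := by
  show Finsupp.mapDomain _ (Finsupp.single m c) = _
  exact Finsupp.mapDomain_single

lemma psi_span_zero (G : Set (MvPolynomial (Edge V E) K))
    (hGbin : ∀ g ∈ G, IsBinomial K V E g) :
    ∀ f ∈ Ideal.span G, psiQ G f = 0 := by
  have key : ∀ x ∈ Ideal.span G, ∀ p : MvPolynomial (Edge V E) K, psiQ G (p * x) = 0 := by
    intro x hx
    refine Submodule.span_induction ?_ ?_ ?_ ?_ hx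
    · intro g hg p
      obtain ⟨a, b, hab, rfl⟩ := hGbin g hg
      induction p using MvPolynomial.induction_on' with
      | monomial m c =>
          have hmove : MoveRel (K := K) (E := E) G (m + a) (m + b) := ⟨a, b, m, hg, rfl, rfl⟩
          have hQ : Quotient.mk (Relation.EqvGen.setoid (MoveRel (K := K) (E := E) G)) (m + a)
              = Quotient.mk _ (m + b) := Quotient.sound (Relation.EqvGen.rel _ _ hmove)
          rw [mul_sub, monomial_mul, monomial_mul, mul_one, map_sub, psiQ_monomial,
            psiQ_monomial, hQ, sub_self]
      | add p q hp hq =>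
          rw [add_mul, map_add, hp, hq, add_zero]
    · intro p
      rw [mul_zero, map_zero]
    · intro x y _ _ hpx hpy p
      rw [mul_add, map_add, hpx p, hpy p, add_zero]
    · intro r x _ hpx p
      rw [smul_eq_mul, ← mul_assoc, hpx (p * r)]
  intro f hf
  have := key f hf 1
  rwa [one_mul] at this

lemma eqvgen_of_mem_span (G : Set (MvPolynomial (Edge V E) K))
    (hGbin : ∀ g ∈ G, IsBinomial K V E g) {u v : Edge V E →₀ ℕ}
    (hf : (monomial u (1 : K) - monomial v 1 : MvPolynomial (Edge V E) K) ∈ Ideal.span G) :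
    Relation.EqvGen (MoveRel (K := K) (E := E) G) u v := by
  have h0 := psi_span_zero G hGbin _ hf
  rw [map_sub, psiQ_monomial, psiQ_monomial, sub_eq_zero] at h0
  rcases (Finsupp.single_eq_single_iff _ _ _ _).mp h0 with ⟨hq, -⟩ | ⟨h1, -⟩
  · exact Quotient.exact hq
  · exact absurd h1 one_ne_zero

lemma step_of_eqvgen {α : Type*} {r : α → α → Prop} {x y : α}
    (h : Relation.EqvGen r x y) :
    x ≠ y → (∃ w, r x w ∨ r w x) ∧ (∃ w, r y w ∨ r w y) := by
  induction h with
  | rel a b hab => exact fun _ => ⟨⟨b, Or.inl hab⟩, ⟨a, Or.inr hab⟩⟩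
  | refl a => exact fun h => absurd rfl h
  | symm a b _ ih => exact fun h => ⟨(ih h.symm).2, (ih h.symm).1⟩
  | trans a b c _ _ ih1 ih2 =>
      intro hac
      by_cases hab : a = b
      · subst hab; exact ih2 hac
      · refine ⟨(ih1 hab).1, ?_⟩
        by_cases hbc : b = c
        · subst hbc; exact (ih1 hab).2
        · exact (ih2 hbc).2

end Conn

end ToricHG
namespace ToricHG

section Comb
set_option linter.unusedSectionVars false
variable {K : Type} [Field K] {V : Type} [Fintype V] [DecidableEq V] {E : Finset (Finset V)}

/-- Each edge `e` has a unique partner edge `ē` sharing its vertex in the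
2-regular part, and the degree of that vertex in any multiset of edges is the
sum of the multiplicities of `e` and `ē`. -/
lemma exists_pair {k : ℕ} {P : V → Fin k}
    (hpart : ∀ e ∈ E, ∀ i : Fin k, (e.filter (fun v => P v = i)).card = 1)
    {i : Fin k} (hloc : ∀ v : V, P v = i → (E.filter (fun e => v ∈ e)).card = 2)
    (e : Edge V E) :
    ∃ ebar : Edge V E, ebar ≠ e ∧ ∃ x : V, ∀ M : Multiset (Edge V E),
      degIn V E x M = M.count e + M.count ebar := by
  classical
  obtain ⟨x, hx⟩ := Finset.card_eq_one.mp (hpart e.1 e.2 i)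
  have hxe : x ∈ e.1 ∧ P x = i := by
    have hxm : x ∈ e.1.filter (fun v => P v = i) := by
      rw [hx]; exact Finset.mem_singleton_self x
    simpa using Finset.mem_filter.mp hxm
  obtain ⟨g, h, hgh, hfil⟩ := Finset.card_eq_two.mp (hloc x hxe.2)
  have hmem : ∀ s : Finset V, (s ∈ E ∧ x ∈ s) ↔ (s = g ∨ s = h) := by
    intro s
    have hiff : s ∈ Finset.filter (fun e => x ∈ e) E ↔ s ∈ ({g, h} : Finset (Finset V)) := by
      rw [hfil]
    simpa [Finset.mem_filter] using hiff
  have hgE : g ∈ E ∧ x ∈ g := (hmem g).mpr (Or.inl rfl)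
  have hhE : h ∈ E ∧ x ∈ h := (hmem h).mpr (Or.inr rfl)
  have heg : e.1 = g ∨ e.1 = h := (hmem e.1).mp ⟨e.2, hxe.1⟩
  have main : ∀ ebar : Edge V E, ebar ≠ e → x ∈ ebar.1 →
      (∀ f : Edge V E, x ∈ f.1 → f = e ∨ f = ebar) →
      ∃ ebar' : Edge V E, ebar' ≠ e ∧ ∃ x' : V, ∀ M : Multiset (Edge V E),
        degIn V E x' M = M.count e + M.count ebar' := by
    intro ebar hne hxbar hchar
    refine ⟨ebar, hne, x, ?_⟩
    intro M
    refine Multiset.induction_on M ?_ (fun f M ih => ?_)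
    · simp [degIn]
    · rw [degIn_cons, Multiset.count_cons, Multiset.count_cons, ih]
      by_cases hxf : x ∈ f.1
      · rcases hchar f hxf with rfl | rfl
        · have h1 : ebar ≠ f := hne
          rw [if_pos hxf, if_pos rfl, if_neg h1]
          omega
        · have h1 : e ≠ f := fun hh => hne hh.symm
          rw [if_pos hxf, if_pos rfl, if_neg h1]
          omega
      · have h1 : e ≠ f := fun hh => hxf (hh ▸ hxe.1)
        have h2 : ebar ≠ f := fun hh => hxf (hh ▸ hxbar)
        rw [if_neg hxf, if_neg h1, if_neg h2]
        omega
  rcases heg with h1 | h1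
  · refine main ⟨h, hhE.1⟩ ?_ hhE.2 ?_
    · intro hEq
      exact hgh (by rw [← h1, ← congrArg Subtype.val hEq])
    · intro f hxf
      rcases (hmem f.1).mp ⟨f.2, hxf⟩ with h2 | h2
      · exact Or.inl (Subtype.ext (h2.trans h1.symm))
      · exact Or.inr (Subtype.ext h2)
  · refine main ⟨g, hgE.1⟩ ?_ hgE.2 ?_
    · intro hEq
      exact hgh (by rw [← h1, ← congrArg Subtype.val hEq])
    · intro f hxf
      rcases (hmem f.1).mp ⟨f.2, hxf⟩ with h2 | h2
      · exact Or.inr (Subtype.ext h2)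
      · exact Or.inl (Subtype.ext (h2.trans h1.symm))

/-- The two sides of a primitive balanced edge set with distinct sides are disjoint. -/
lemma prim_disjoint (hE : ∀ e ∈ E, e.Nonempty) {B R : Multiset (Edge V E)}
    (hprim : Primitive V E B R) (hBR : B ≠ R) : B ∩ R = 0 := by
  classical
  set T := B ∩ R with hT
  have hTB : T ≤ B := Multiset.inter_le_left
  have hTR : T ≤ R := Multiset.inter_le_right
  by_contra hT0
  have hne1 : T ≠ B := by
    intro h
    have hBR' : B ≤ R := by rw [← h]; exact hTR
    have hbal0 : Balanced V E (R - B) 0 := by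
      intro v
      rw [degIn_sub v hBR', degIn_zero]
      have := hprim.1 v
      omega
    have h0 : R - B = 0 := balanced_zero hE hbal0
    have : R ≤ B := tsub_eq_zero_iff_le.mp h0
    exact hBR (le_antisymm hBR' this)
  have hne2 : T ≠ R := by
    intro h
    have hRB' : R ≤ B := by rw [← h]; exact hTB
    have hbal0 : Balanced V E (B - R) 0 := by
      intro v
      rw [degIn_sub v hRB', degIn_zero]
      have := hprim.1 v
      omega
    have h0 : B - R = 0 := balanced_zero hE hbal0
    have : B ≤ R := tsub_eq_zero_iff_le.mp h0
    exact hBR (le_antisymm this hRB')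
  exact hprim.2 ⟨T, T, fun hc => hT0 hc.1, fun v => rfl,
    lt_of_le_of_ne hTB hne1, lt_of_le_of_ne hTR hne2⟩

/-- **Fiber lemma.** Under the hypergraph hypotheses, the fiber of a primitive
balanced pair consists of exactly its two sides. -/
lemma fiber (hE : ∀ e ∈ E, e.Nonempty) {k : ℕ} {P : V → Fin k}
    (hpart : ∀ e ∈ E, ∀ i : Fin k, (e.filter (fun v => P v = i)).card = 1)
    {i : Fin k} (hloc : ∀ v : V, P v = i → (E.filter (fun e => v ∈ e)).card = 2)
    {B R W : Multiset (Edge V E)}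
    (hprim : Primitive V E B R) (hBR : B ≠ R) (hWB : Balanced V E W B) :
    W = B ∨ W = R := by
  classical
  have hbalBR := hprim.1
  have hdisj := prim_disjoint hE hprim hBR
  have hcount : ∀ a : Edge V E, Multiset.count a B ⊓ Multiset.count a R = 0 := by
    intro a
    have := congrArg (Multiset.count a) hdisj
    rwa [Multiset.count_inter, Multiset.count_zero] at this
  set T := W ∩ B with hT
  have hTW : T ≤ W := Multiset.inter_le_left
  have hTB : T ≤ B := Multiset.inter_le_right
  have hWTR : W - T ≤ R := by
    rw [Multiset.le_iff_count]
    intro a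
    obtain ⟨abar, habar, x, hx⟩ := exists_pair hpart hloc a
    have pairB := hbalBR x
    rw [hx B, hx R] at pairB
    have pairW := hWB x
    rw [hx W, hx B] at pairW
    have hd := hcount a
    have hd' := hcount abar
    rw [Multiset.count_sub, hT, Multiset.count_inter]
    omega
  by_cases hWBeq : W = B
  · exact Or.inl hWBeq
  right
  set B' := B - T with hB'
  set R' := W - T with hR'
  have hB'B : B' ≤ B := tsub_le_self
  have hR'R : R' ≤ R := hWTR
  have hbal' : Balanced V E B' R' := by
    intro v
    rw [hB', hR', degIn_sub v hTB, degIn_sub v hTW, hWB v]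
  have hnz : ¬(B' = 0 ∧ R' = 0) := by
    rintro ⟨h1, h2⟩
    have hBT : B ≤ T := tsub_eq_zero_iff_le.mp h1
    have hWT : W ≤ T := tsub_eq_zero_iff_le.mp h2
    exact hWBeq (le_antisymm (hWT.trans hTB) (hBT.trans hTW))
  have hnotboth : ¬(B' < B ∧ R' < R) := fun hc =>
    hprim.2 ⟨B', R', hnz, hbal', hc.1, hc.2⟩
  by_cases hB'eq : B' = B
  · have hT0 : T = 0 := by
      have hcard := congrArg Multiset.card hB'eq
      rw [hB', Multiset.card_sub hTB] at hcard
      have hle : Multiset.card T ≤ Multiset.card B := Multiset.card_le_card hTB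
      rw [← Multiset.card_eq_zero]
      omega
    have hR'W : R' = W := by rw [hR', hT0, tsub_zero]
    have hWR : Balanced V E W R := fun v => (hWB v).trans (hbalBR v)
    have hWleR : W ≤ R := hR'W ▸ hR'R
    have hbal0 : Balanced V E (R - W) 0 := by
      intro v
      rw [degIn_sub v hWleR, degIn_zero]
      have := hWR v
      omega
    have h0 : R - W = 0 := balanced_zero hE hbal0
    exact le_antisymm hWleR (tsub_eq_zero_iff_le.mp h0)
  · have hB'lt : B' < B := lt_of_le_of_ne hB'B hB'eq
    have hR'eq : R' = R := by
      by_contra hcon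
      exact hnotboth ⟨hB'lt, lt_of_le_of_ne hR'R hcon⟩
    have hT0 : T = 0 := by
      apply balanced_zero hE
      intro v
      have h1 := hbal' v
      have h2 := hbalBR v
      have h3 := hWB v
      have h4 : degIn V E v B' = degIn V E v B - degIn V E v T := by
        rw [hB', degIn_sub v hTB]
      have h5 : degIn V E v R' = degIn V E v W - degIn V E v T := by
        rw [hR', degIn_sub v hTW]
      have h6 : degIn V E v T ≤ degIn V E v B := degIn_le v hTB
      have h8 : degIn V E v R' = degIn V E v R := by rw [hR'eq]
      rw [degIn_zero]
      omega
    rw [← hR'eq, hR', hT0, tsub_zero]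

/-- If a balanced binomial move starting from `t^B` ends at `t^R`, it must be
the full move `(B, R)` itself. -/
lemma forced (hE : ∀ e ∈ E, e.Nonempty) {B R : Multiset (Edge V E)}
    (hprim : Primitive V E B R) (hBR : B ≠ R)
    {a b m : Edge V E →₀ ℕ} (hab : a ≠ b)
    (hbal : Balanced V E (Finsupp.toMultiset a) (Finsupp.toMultiset b))
    (hu : Multiset.toFinsupp B = m + a) (hv : Multiset.toFinsupp R = m + b) :
    a = Multiset.toFinsupp B ∧ b = Multiset.toFinsupp R := by
  classical
  set A := Finsupp.toMultiset a with hA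
  set Bb := Finsupp.toMultiset b with hBb
  have hcountB : ∀ f : Edge V E, Multiset.count f B = m f + a f := by
    intro f
    have := congrArg (fun z : Edge V E →₀ ℕ => z f) hu
    simpa [Multiset.toFinsupp_apply] using this
  have hcountR : ∀ f : Edge V E, Multiset.count f R = m f + b f := by
    intro f
    have := congrArg (fun z : Edge V E →₀ ℕ => z f) hv
    simpa [Multiset.toFinsupp_apply] using this
  have hAB : A ≤ B := by
    rw [Multiset.le_iff_count]
    intro f
    rw [hA, Finsupp.count_toMultiset, hcountB f]
    omega
  have hBbR : Bb ≤ R := by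
    rw [Multiset.le_iff_count]
    intro f
    rw [hBb, Finsupp.count_toMultiset, hcountR f]
    omega
  have hA0 : A ≠ 0 := by
    intro h
    have hBb0 : Bb = 0 := balanced_zero hE (balanced_symm (h ▸ hbal))
    apply hab
    rw [← Finsupp.toMultiset_toFinsupp a, ← Finsupp.toMultiset_toFinsupp b, ← hA, ← hBb, h, hBb0]
  by_cases hAeq : A = B
  · have ha : a = Multiset.toFinsupp B := by
      rw [← hAeq, hA, Finsupp.toMultiset_toFinsupp]
    have hm : m = 0 := by
      ext f
      have h1 := hcountB f
      have h2 : (Multiset.toFinsupp B) f = Multiset.count f B := Multiset.toFinsupp_apply _ _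
      have h3 : a f = (Multiset.toFinsupp B) f := by rw [ha]
      simp only [Finsupp.coe_zero, Pi.zero_apply]
      omega
    rw [hm, zero_add] at hv
    exact ⟨ha, hv.symm⟩
  · have hAlt : A < B := lt_of_le_of_ne hAB hAeq
    have hBbne : Bb ≠ R := by
      intro h
      have hb : b = Multiset.toFinsupp R := by
        rw [← h, hBb, Finsupp.toMultiset_toFinsupp]
      have hm : m = 0 := by
        ext f
        have h1 := hcountR f
        have h2 : (Multiset.toFinsupp R) f = Multiset.count f R := Multiset.toFinsupp_apply _ _
        have h3 : b f = (Multiset.toFinsupp R) f := by rw [hb]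
        simp only [Finsupp.coe_zero, Pi.zero_apply]
        omega
      apply hAeq
      rw [hm, zero_add] at hu
      rw [hA, ← hu, Multiset.toFinsupp_toMultiset]
    exact absurd ⟨A, Bb, fun hc => hA0 hc.1, hbal, hAlt, lt_of_le_of_ne hBbR hBbne⟩ hprim.2

end Comb

end ToricHG
namespace ToricHG

/-- Let `H` be a `k`-uniform `k`-partite hypergraph (partition recorded by
`P : V → Fin k`) such that for some index `i` every vertex of the part `P⁻¹(i)` lies in exactly
two edges of `H`. Then the Graver basis generates `I_H` and each of its elements is
indispensable; hence it is the unique minimal binomial generating set of `I_H`. -/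
theorem graver_unique_minimal_of_partite_locally_two_regular
    (K : Type) [Field K] (V : Type) [Fintype V] [DecidableEq V]
    (k : ℕ) (E : Finset (Finset V)) (hE : ∀ e ∈ E, e.Nonempty)
    (P : V → Fin k)
    (hpart : ∀ e ∈ E, ∀ i : Fin k, (e.filter (fun v => P v = i)).card = 1)
    (i : Fin k)
    (hloc : ∀ v : V, P v = i → (E.filter (fun e => v ∈ e)).card = 2) :
    Ideal.span (GraverSet K V E) = toricIdeal K V E ∧
      ∀ f ∈ GraverSet K V E, Indispensable K V E f := by
  classical
  refine ⟨span_graver_eq hE, ?_⟩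
  rintro f ⟨B, R, hprim, hBR, rfl⟩
  intro G hGbin hGspan
  have huv : Multiset.toFinsupp B ≠ Multiset.toFinsupp R := by
    intro h
    apply hBR
    rw [← Multiset.toFinsupp_toMultiset B, ← Multiset.toFinsupp_toMultiset R, h]
  have hfI : binom K V E B R ∈ Ideal.span G := by
    rw [hGspan]
    exact (mem_toricIdeal_iff B R).mpr hprim.1
  rw [binom_eq] at hfI
  have hconn := eqvgen_of_mem_span G hGbin hfI
  obtain ⟨⟨w, hw⟩, -⟩ := step_of_eqvgen hconn huv
  rcases hw with hw | hw
  · -- a forward move from u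
    obtain ⟨a, b, m, hgG, hu, hwv⟩ := hw
    have hab : a ≠ b := by
      rintro rfl
      have h0 : (0 : MvPolynomial (Edge V E) K) ∈ G := by
        have : (monomial a (1 : K) - monomial a 1 : MvPolynomial (Edge V E) K) = 0 := sub_self _
        rwa [this] at hgG
      obtain ⟨a', b', hab', heq⟩ := hGbin 0 h0
      have : (monomial a' (1 : K) : MvPolynomial (Edge V E) K) = monomial b' 1 := by
        have := heq.symm
        rwa [sub_eq_zero] at this
      exact hab' (monomial_one_inj this)
    have hgI : (monomial a (1 : K) - monomial b 1 : MvPolynomial (Edge V E) K)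
        ∈ toricIdeal K V E := by
      rw [← hGspan]
      exact Ideal.subset_span hgG
    have hbalab := balanced_of_binomial_mem hgI
    have hWfib : Balanced V E (Finsupp.toMultiset (m + b)) B := by
      intro x
      have h1 : Finsupp.toMultiset (m + b) = Finsupp.toMultiset m + Finsupp.toMultiset b :=
        map_add _ _ _
      have h2 : Finsupp.toMultiset (m + a) = Finsupp.toMultiset m + Finsupp.toMultiset a :=
        map_add _ _ _
      have h3 : B = Finsupp.toMultiset (m + a) := by
        rw [← hu, Multiset.toFinsupp_toMultiset]
      rw [h1, h3, h2, degIn_add, degIn_add, hbalab x]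
    rcases fiber hE hpart hloc hprim hBR hWfib with hWB | hWR
    · exfalso
      apply hab
      have hmm : m + b = m + a := by
        have hb : m + b = Multiset.toFinsupp B := by
          rw [← hWB, Finsupp.toMultiset_toFinsupp]
        rw [hb, hu]
      ext ff
      have := congrArg (fun z : Edge V E →₀ ℕ => z ff) hmm
      simp only [Finsupp.add_apply] at this
      omega
    · have hv : Multiset.toFinsupp R = m + b := by
        rw [← hWR, Finsupp.toMultiset_toFinsupp]
      obtain ⟨ha, hb⟩ := forced hE hprim hBR hab hbalab hu hv
      left
      rw [binom_eq, ← ha, ← hb]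
      exact hgG
  · -- a backward move into u
    obtain ⟨a, b, m, hgG, hwv, hu⟩ := hw
    have hab : a ≠ b := by
      rintro rfl
      have h0 : (0 : MvPolynomial (Edge V E) K) ∈ G := by
        have : (monomial a (1 : K) - monomial a 1 : MvPolynomial (Edge V E) K) = 0 := sub_self _
        rwa [this] at hgG
      obtain ⟨a', b', hab', heq⟩ := hGbin 0 h0
      have : (monomial a' (1 : K) : MvPolynomial (Edge V E) K) = monomial b' 1 := by
        have := heq.symm
        rwa [sub_eq_zero] at this
      exact hab' (monomial_one_inj this)
    have hgI : (monomial a (1 : K) - monomial b 1 : MvPolynomial (Edge V E) K)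
        ∈ toricIdeal K V E := by
      rw [← hGspan]
      exact Ideal.subset_span hgG
    have hbalab := balanced_of_binomial_mem hgI
    have hWfib : Balanced V E (Finsupp.toMultiset (m + a)) B := by
      intro x
      have h1 : Finsupp.toMultiset (m + a) = Finsupp.toMultiset m + Finsupp.toMultiset a :=
        map_add _ _ _
      have h2 : Finsupp.toMultiset (m + b) = Finsupp.toMultiset m + Finsupp.toMultiset b :=
        map_add _ _ _
      have h3 : B = Finsupp.toMultiset (m + b) := by
        rw [← hu, Multiset.toFinsupp_toMultiset]
      rw [h1, h3, h2, degIn_add, degIn_add, hbalab x]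
    rcases fiber hE hpart hloc hprim hBR hWfib with hWB | hWR
    · exfalso
      apply hab
      have hmm : m + a = m + b := by
        have hb2 : m + a = Multiset.toFinsupp B := by
          rw [← hWB, Finsupp.toMultiset_toFinsupp]
        rw [hb2, hu]
      ext ff
      have := congrArg (fun z : Edge V E →₀ ℕ => z ff) hmm
      simp only [Finsupp.add_apply] at this
      omega
    · have hv : Multiset.toFinsupp R = m + a := by
        rw [← hWR, Finsupp.toMultiset_toFinsupp]
      obtain ⟨hbB, haR⟩ := forced hE hprim hBR hab.symm (balanced_symm hbalab) hu hv
      right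
      rw [binom_eq, neg_sub, ← hbB, ← haR]
      exact hgG

end ToricHG
end

section
/- Fix a field k. The toric ideal I(2,2,2) of the no-3-way-interaction model on 2×2×2 contingency tables is the principal ideal generated by the single degree-4 binomial t_{111}t_{122}t_{212}t_{221} − t_{112}t_{121}t_{211}t_{222} (indices i,j,k ∈ {1,2}). -/
open MvPolynomial

namespace No3Way

variable (K : Type) [Field K]

/-- The monomial map `t_{ijk} ↦ u_{ij} v_{ik} w_{jk}` of the no-`3`-way-interaction model on
`a × r × c` contingency tables. -/
noncomputable def phi3 (a r c : ℕ) :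
    MvPolynomial (Fin a × Fin r × Fin c) K →ₐ[K]
      MvPolynomial ((Fin a × Fin r) ⊕ (Fin a × Fin c) ⊕ (Fin r × Fin c)) K :=
  aeval (fun p : Fin a × Fin r × Fin c =>
    X (Sum.inl (p.1, p.2.1)) * X (Sum.inr (Sum.inl (p.1, p.2.2))) *
      X (Sum.inr (Sum.inr (p.2.1, p.2.2))))

/-- The toric ideal `I(a,r,c)` of the no-`3`-way-interaction model on `a × r × c` tables. -/
noncomputable def I3 (a r c : ℕ) : Ideal (MvPolynomial (Fin a × Fin r × Fin c) K) :=
  RingHom.ker (phi3 K a r c).toRingHom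

/-- A binomial: the difference of two distinct monic monomials. -/
def IsBinomial {σ : Type} (f : MvPolynomial σ K) : Prop :=
  ∃ a b : σ →₀ ℕ, a ≠ b ∧ f = monomial a 1 - monomial b 1

end No3Way

namespace No3Way

open MvPolynomial

variable (K : Type) [Field K]

abbrev σ3 := Fin 2 × Fin 2 × Fin 2
abbrev τ3 := (Fin 2 × Fin 2) ⊕ (Fin 2 × Fin 2) ⊕ (Fin 2 × Fin 2)

noncomputable def wgt (p : σ3) : τ3 →₀ ℕ :=
  Finsupp.single (Sum.inl (p.1, p.2.1)) 1 + Finsupp.single (Sum.inr (Sum.inl (p.1, p.2.2))) 1 +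
    Finsupp.single (Sum.inr (Sum.inr (p.2.1, p.2.2))) 1

noncomputable def Adeg (a : σ3 →₀ ℕ) : τ3 →₀ ℕ := ∑ p : σ3, a p • wgt p

lemma Adeg_apply₁ (a : σ3 →₀ ℕ) (i j : Fin 2) :
    Adeg a (Sum.inl (i, j)) = a (i, j, 0) + a (i, j, 1) := by
  simp only [Adeg, Finsupp.finset_sum_apply, Finsupp.smul_apply, wgt, Finsupp.add_apply,
    Finsupp.single_apply, Fintype.sum_prod_type, Fin.sum_univ_two]
  fin_cases i <;> fin_cases j <;> simp [Prod.ext_iff]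

lemma Adeg_apply₂ (a : σ3 →₀ ℕ) (i k : Fin 2) :
    Adeg a (Sum.inr (Sum.inl (i, k))) = a (i, 0, k) + a (i, 1, k) := by
  simp only [Adeg, Finsupp.finset_sum_apply, Finsupp.smul_apply, wgt, Finsupp.add_apply,
    Finsupp.single_apply, Fintype.sum_prod_type, Fin.sum_univ_two]
  fin_cases i <;> fin_cases k <;> simp [Prod.ext_iff]

lemma Adeg_apply₃ (a : σ3 →₀ ℕ) (j k : Fin 2) :
    Adeg a (Sum.inr (Sum.inr (j, k))) = a (0, j, k) + a (1, j, k) := by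
  simp only [Adeg, Finsupp.finset_sum_apply, Finsupp.smul_apply, wgt, Finsupp.add_apply,
    Finsupp.single_apply, Fintype.sum_prod_type, Fin.sum_univ_two]
  fin_cases j <;> fin_cases k <;> simp [Prod.ext_iff]

lemma Adeg_add (a b : σ3 →₀ ℕ) : Adeg (a + b) = Adeg a + Adeg b := by
  simp [Adeg, add_smul, Finset.sum_add_distrib]

lemma Adeg_single (p : σ3) (n : ℕ) : Adeg (Finsupp.single p n) = n • wgt p := by
  simp [Adeg, Finsupp.single_apply]

lemma phi3_X (p : σ3) : phi3 K 2 2 2 (X p) = monomial (wgt p) 1 := by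
  show aeval _ (X p) = _
  rw [aeval_X]
  simp [wgt, X, monomial_mul]

lemma phi3_monomial (a : σ3 →₀ ℕ) (c : K) :
    phi3 K 2 2 2 (monomial a c) = monomial (Adeg a) c := by
  induction a using Finsupp.induction with
  | zero => simp [Adeg, monomial_zero', algHom_C]
  | single_add p n s hps hn ih =>
    have h1 : (monomial (Finsupp.single p n + s) c : MvPolynomial σ3 K)
        = monomial (Finsupp.single p n) 1 * monomial s c := by
      rw [monomial_mul, one_mul]
    rw [h1, map_mul, ih, ← X_pow_eq_monomial, map_pow, phi3_X, monomial_pow, one_pow,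
      Adeg_add, Adeg_single, monomial_mul, one_mul]


noncomputable def gen : MvPolynomial σ3 K :=
  X (0, 0, 0) * X (0, 1, 1) * X (1, 0, 1) * X (1, 1, 0) -
    X (0, 0, 1) * X (0, 1, 0) * X (1, 0, 0) * X (1, 1, 1)

noncomputable def Upl : σ3 →₀ ℕ :=
  Finsupp.single (0, 0, 0) 1 + Finsupp.single (0, 1, 1) 1 + Finsupp.single (1, 0, 1) 1 +
    Finsupp.single (1, 1, 0) 1

noncomputable def Umi : σ3 →₀ ℕ :=
  Finsupp.single (0, 0, 1) 1 + Finsupp.single (0, 1, 0) 1 + Finsupp.single (1, 0, 0) 1 +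
    Finsupp.single (1, 1, 1) 1

lemma gen_eq : gen K = monomial Upl 1 - monomial Umi 1 := by
  simp [gen, Upl, Umi, X, monomial_mul]

lemma binomial_mem_aux (a b : σ3 →₀ ℕ) (h : Adeg a = Adeg b) (h0 : b (0, 0, 0) ≤ a (0, 0, 0)) :
    monomial a (1 : K) - monomial b 1 ∈ Ideal.span {gen K} := by
  set m := a (0, 0, 0) - b (0, 0, 0) with hm
  have e1 : a (0,0,0) + a (0,0,1) = b (0,0,0) + b (0,0,1) := by
    have := DFunLike.congr_fun h (Sum.inl (0, 0)); rwa [Adeg_apply₁, Adeg_apply₁] at this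
  have e2 : a (0,1,0) + a (0,1,1) = b (0,1,0) + b (0,1,1) := by
    have := DFunLike.congr_fun h (Sum.inl (0, 1)); rwa [Adeg_apply₁, Adeg_apply₁] at this
  have e3 : a (1,0,0) + a (1,0,1) = b (1,0,0) + b (1,0,1) := by
    have := DFunLike.congr_fun h (Sum.inl (1, 0)); rwa [Adeg_apply₁, Adeg_apply₁] at this
  have e4 : a (1,1,0) + a (1,1,1) = b (1,1,0) + b (1,1,1) := by
    have := DFunLike.congr_fun h (Sum.inl (1, 1)); rwa [Adeg_apply₁, Adeg_apply₁] at this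
  have e5 : a (0,0,0) + a (0,1,0) = b (0,0,0) + b (0,1,0) := by
    have := DFunLike.congr_fun h (Sum.inr (Sum.inl (0, 0)))
    rwa [Adeg_apply₂, Adeg_apply₂] at this
  have e6 : a (1,0,0) + a (1,1,0) = b (1,0,0) + b (1,1,0) := by
    have := DFunLike.congr_fun h (Sum.inr (Sum.inl (1, 0)))
    rwa [Adeg_apply₂, Adeg_apply₂] at this
  have e9 : a (0,0,0) + a (1,0,0) = b (0,0,0) + b (1,0,0) := by
    have := DFunLike.congr_fun h (Sum.inr (Sum.inr (0, 0)))
    rwa [Adeg_apply₃, Adeg_apply₃] at this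
  have f000 : a (0,0,0) = b (0,0,0) + m := by omega
  have f001 : b (0,0,1) = a (0,0,1) + m := by omega
  have f010 : b (0,1,0) = a (0,1,0) + m := by omega
  have f100 : b (1,0,0) = a (1,0,0) + m := by omega
  have f011 : a (0,1,1) = b (0,1,1) + m := by omega
  have f101 : a (1,0,1) = b (1,0,1) + m := by omega
  have f110 : a (1,1,0) = b (1,1,0) + m := by omega
  have f111 : b (1,1,1) = a (1,1,1) + m := by omega
  set c := a - m • Upl with hc
  have hca : c + m • Upl = a := by
    ext p
    simp only [hc, Finsupp.add_apply, Finsupp.tsub_apply, Finsupp.smul_apply, smul_eq_mul]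
    fin_cases p <;> simp [Upl, Finsupp.single_apply, Prod.ext_iff, -Prod.mk_zero_zero, -Prod.mk_one_one] <;> omega
  have hcb : c + m • Umi = b := by
    ext p
    simp only [hc, Finsupp.add_apply, Finsupp.tsub_apply, Finsupp.smul_apply, smul_eq_mul]
    fin_cases p <;> simp [Upl, Umi, Finsupp.single_apply, Prod.ext_iff, -Prod.mk_zero_zero, -Prod.mk_one_one] <;> omega
  have key : monomial a (1 : K) - monomial b 1 =
      monomial c 1 * ((monomial Upl 1) ^ m - (monomial Umi 1) ^ m) := by
    rw [monomial_pow, monomial_pow, one_pow, mul_sub, monomial_mul, monomial_mul, one_mul,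
      hca, hcb]
  rw [key, gen_eq]
  exact Ideal.mem_span_singleton.mpr (Dvd.dvd.mul_left (sub_dvd_pow_sub_pow _ _ m) _)

lemma binomial_mem (a b : σ3 →₀ ℕ) (h : Adeg a = Adeg b) :
    monomial a (1 : K) - monomial b 1 ∈ Ideal.span {gen K} := by
  rcases le_total (b (0, 0, 0)) (a (0, 0, 0)) with h0 | h0
  · exact binomial_mem_aux K a b h h0
  · have h1 := binomial_mem_aux K b a h.symm h0
    have h2 : monomial a (1 : K) - monomial b 1 = -(monomial b 1 - monomial a 1) := by ring
    rw [h2]; exact neg_mem h1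


lemma phi3_gen : phi3 K 2 2 2 (gen K) = 0 := by
  show aeval _ _ = 0
  simp only [gen, map_sub, map_mul, aeval_X]
  ring

lemma ker_le_aux : ∀ n (f : MvPolynomial σ3 K), f.support.card ≤ n →
    phi3 K 2 2 2 f = 0 → f ∈ Ideal.span {gen K} := by
  intro n
  induction n with
  | zero =>
    intro f hcard _
    have : f = 0 := support_eq_empty.mp (Finset.card_eq_zero.mp (Nat.le_zero.mp hcard))
    simp [this]
  | succ n ih =>
    intro f hcard hker
    by_cases hf0 : f = 0
    · simp [hf0]
    obtain ⟨a, ha⟩ := support_nonempty.mpr hf0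
    have hphi : phi3 K 2 2 2 f = ∑ q ∈ f.support, monomial (Adeg q) (coeff q f) := by
      conv_lhs => rw [f.as_sum]
      rw [map_sum]
      exact Finset.sum_congr rfl fun q _ => phi3_monomial K q _
    have hco : ∑ q ∈ f.support, (if Adeg q = Adeg a then coeff q f else 0) = 0 := by
      have h := congrArg (coeff (Adeg a)) hphi
      rw [hker] at h
      simpa [coeff_sum, coeff_monomial] using h.symm
    have hex : ∃ b ∈ f.support, b ≠ a ∧ Adeg b = Adeg a := by
      by_contra hcon
      push_neg at hcon
      have heq : ∑ q ∈ f.support, (if Adeg q = Adeg a then coeff q f else 0) = coeff a f := by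
        rw [Finset.sum_eq_single a]
        · simp
        · intro q hq hqa
          simp [hcon q hq hqa]
        · intro h; exact absurd ha h
      rw [heq] at hco
      exact (mem_support_iff.mp ha) hco
    obtain ⟨b, hbs, hba, hAb⟩ := hex
    set c0 := coeff a f with hc0
    set g1 : MvPolynomial σ3 K := monomial a 1 - monomial b 1 with hg1
    have hg1mem : g1 ∈ Ideal.span {gen K} := binomial_mem K a b hAb.symm
    set f' := f - C c0 * g1 with hf'
    have hker' : phi3 K 2 2 2 f' = 0 := by
      have hz : phi3 K 2 2 2 g1 = 0 := by
        rw [hg1, map_sub, phi3_monomial, phi3_monomial, hAb, sub_self]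
      rw [hf', map_sub, map_mul, hker, hz, mul_zero, sub_zero]
    have hsub : f'.support ⊆ f.support.erase a := by
      intro q hq
      rw [mem_support_iff] at hq
      have hcq : coeff q f' =
          coeff q f - c0 * ((if a = q then (1 : K) else 0) - (if b = q then 1 else 0)) := by
        rw [hf', hg1]
        simp [coeff_sub, coeff_monomial, mul_sub]
      have hqa : q ≠ a := by
        rintro rfl
        apply hq
        rw [hcq, if_pos rfl, if_neg hba, ← hc0]
        ring
      refine Finset.mem_erase.mpr ⟨hqa, mem_support_iff.mpr fun hqf => ?_⟩
      have hqb : q ≠ b := by rintro rfl; exact (mem_support_iff.mp hbs) hqf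
      apply hq
      rw [hcq, hqf, if_neg (fun h => hqa h.symm), if_neg (fun h => hqb h.symm)]
      ring
    have hcard' : f'.support.card ≤ n := by
      have h1 := Finset.card_le_card hsub
      have h2 : (f.support.erase a).card = f.support.card - 1 := Finset.card_erase_of_mem ha
      have h3 : 1 ≤ f.support.card := Finset.card_pos.mpr ⟨a, ha⟩
      omega
    have hmem' := ih f' hcard' hker'
    have hfe : f = f' + C c0 * g1 := by rw [hf']; ring
    rw [hfe]
    exact Ideal.add_mem _ hmem' (Ideal.mul_mem_left _ _ hg1mem)

/-- The toric ideal `I(2,2,2)` of the no-`3`-way-interaction model on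
`2 × 2 × 2` tables is principal, generated by the degree-`4` binomial
`t₁₁₁ t₁₂₂ t₂₁₂ t₂₂₁ − t₁₁₂ t₁₂₁ t₂₁₁ t₂₂₂` (written with `0`-based indices). -/
theorem I3_two_two_two_principal (K : Type) [Field K] :
    I3 K 2 2 2 = Ideal.span
      {(X (0, 0, 0) * X (0, 1, 1) * X (1, 0, 1) * X (1, 1, 0) -
        X (0, 0, 1) * X (0, 1, 0) * X (1, 0, 0) * X (1, 1, 1) :
        MvPolynomial (Fin 2 × Fin 2 × Fin 2) K)} := by
  have hgen : (X (0, 0, 0) * X (0, 1, 1) * X (1, 0, 1) * X (1, 1, 0) -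
      X (0, 0, 1) * X (0, 1, 0) * X (1, 0, 0) * X (1, 1, 1) :
      MvPolynomial (Fin 2 × Fin 2 × Fin 2) K) = gen K := rfl
  rw [hgen]
  apply le_antisymm
  · intro f hf
    have hker : phi3 K 2 2 2 f = 0 := hf
    exact ker_le_aux K f.support.card f le_rfl hker
  · rw [Ideal.span_le]
    rintro x hx
    simp only [Set.mem_singleton_iff] at hx
    subst hx
    show (phi3 K 2 2 2).toRingHom _ = 0
    exact phi3_gen K

end No3Way
end
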